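/- arXiv:2503.14717 — 4 statements merged into one kernel-verified Lean document; each statement's English description precedes it below -/
import Mathlib

section
/- For every real q > 0, the Kolmogorov–Smirnov distance between the standard normal CDF and its scaled version satisfies sup_{t ∈ ℝ} |Φ(q·t) − Φ(t)| ≤ (1/√(2πe)) · (max{q, 1/q} − 1). -/
open MeasureTheory Real

/-- The standard normal cumulative distribution function. -/
noncomputable def Phi (t : ℝ) : ℝ :=
  (Real.sqrt (2 * Real.pi))⁻¹ * ∫ x in Set.Iic t, Real.exp (-x ^ 2 / 2)

lemma gauss_integrable : Integrable (fun x : ℝ => Real.exp (-x ^ 2 / 2)) := by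
  have h := integrable_exp_neg_mul_sq (by norm_num : (0:ℝ) < 1/2)
  have he : (fun x : ℝ => Real.exp (-x ^ 2 / 2)) = fun x => Real.exp (-(1/2) * x ^ 2) := by
    funext x; ring_nf
  rw [he]; exact h

lemma phi_sub (a b : ℝ) :
    Phi b - Phi a = (Real.sqrt (2 * Real.pi))⁻¹ * ∫ x in a..b, Real.exp (-x ^ 2 / 2) := by
  unfold Phi
  rw [← mul_sub,
    intervalIntegral.integral_Iic_sub_Iic gauss_integrable.integrableOn gauss_integrable.integrableOn]

/-- `s e^{-s²/2} ≤ e^{-1/2}` for `s ≥ 0`. -/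
lemma mode_bound (s : ℝ) (hs : 0 ≤ s) :
    s * Real.exp (-s ^ 2 / 2) ≤ Real.exp (-(1:ℝ) / 2) := by
  have h1 : s ≤ Real.exp ((s ^ 2 - 1) / 2) := by
    have := Real.add_one_le_exp ((s ^ 2 - 1) / 2)
    nlinarith [sq_nonneg (s - 1)]
  have h2 : Real.exp ((s ^ 2 - 1) / 2) * Real.exp (-s ^ 2 / 2) = Real.exp (-(1:ℝ) / 2) := by
    rw [← Real.exp_add]; ring_nf
  have h3 : (0:ℝ) < Real.exp (-s ^ 2 / 2) := Real.exp_pos _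
  nlinarith

/-- Key integral bound: if `c² ≤ x²` on `[a,b]`, then
`Phi b - Phi a ≤ (√(2π))⁻¹ (b-a) e^{-c²/2}`. -/
lemma key_bound (a b c : ℝ) (hab : a ≤ b) (hc : ∀ x ∈ Set.Icc a b, c ^ 2 ≤ x ^ 2) :
    Phi b - Phi a ≤ (Real.sqrt (2 * Real.pi))⁻¹ * ((b - a) * Real.exp (-c ^ 2 / 2)) := by
  rw [phi_sub]
  have hpos : (0:ℝ) ≤ (Real.sqrt (2 * Real.pi))⁻¹ := by positivity
  refine mul_le_mul_of_nonneg_left ?_ hpos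
  have hint : (∫ x in a..b, Real.exp (-x ^ 2 / 2)) ≤
      ∫ _x in a..b, Real.exp (-c ^ 2 / 2) := by
    refine intervalIntegral.integral_mono_on hab
      (gauss_integrable.intervalIntegrable) (intervalIntegrable_const) ?_
    intro x hx
    exact Real.exp_le_exp.2 (by nlinarith [hc x hx])
  simpa [mul_comm] using hint

/-- The constant identity `(√(2π))⁻¹ e^{-1/2} = (√(2πe))⁻¹`. -/
lemma const_eq :
    (Real.sqrt (2 * Real.pi))⁻¹ * Real.exp (-(1:ℝ) / 2) =
      (Real.sqrt (2 * Real.pi * Real.exp 1))⁻¹ := by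
  have h2pi : (0:ℝ) ≤ 2 * Real.pi := by positivity
  rw [Real.sqrt_mul h2pi, ← Real.exp_half, mul_inv]
  congr 1
  rw [← Real.exp_neg]
  norm_num

lemma pointwise_bound (q t : ℝ) (hq : 0 < q) :
    |Phi (q * t) - Phi t| ≤
      (Real.sqrt (2 * Real.pi * Real.exp 1))⁻¹ * (max q q⁻¹ - 1) := by
  rw [← const_eq]
  rcases le_total 1 q with hq1 | hq1
  · -- q ≥ 1, max = q
    have hmax : max q q⁻¹ = q :=
      max_eq_left ((inv_le_one_iff₀.2 (Or.inr hq1)).trans hq1)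
    rw [hmax]
    rcases le_total 0 t with ht | ht
    · -- t ≥ 0: t ≤ qt
      have hle : t ≤ q * t := by nlinarith
      have hb := key_bound t (q * t) t hle (fun x hx => by nlinarith [hx.1, hx.2])
      have habs : |Phi (q * t) - Phi t| = Phi (q * t) - Phi t := by
        rw [abs_of_nonneg]
        have := phi_sub t (q * t)
        have hint : 0 ≤ ∫ x in t..(q*t), Real.exp (-x ^ 2 / 2) :=
          intervalIntegral.integral_nonneg hle (fun x _ => (Real.exp_pos _).le)
        rw [this]; positivity
      rw [habs]
      calc Phi (q * t) - Phi t
          ≤ (Real.sqrt (2 * Real.pi))⁻¹ * ((q * t - t) * Real.exp (-t ^ 2 / 2)) := hb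
        _ = (Real.sqrt (2 * Real.pi))⁻¹ * ((q - 1) * (t * Real.exp (-t ^ 2 / 2))) := by ring
        _ ≤ (Real.sqrt (2 * Real.pi))⁻¹ * ((q - 1) * Real.exp (-(1:ℝ) / 2)) := by
            have := mode_bound t ht
            have h1 : (0:ℝ) ≤ q - 1 := by linarith
            have h2 : (0:ℝ) ≤ (Real.sqrt (2 * Real.pi))⁻¹ := by positivity
            exact mul_le_mul_of_nonneg_left (mul_le_mul_of_nonneg_left this h1) h2
        _ = (Real.sqrt (2 * Real.pi))⁻¹ * Real.exp (-(1:ℝ) / 2) * (q - 1) := by ring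
    · -- t ≤ 0: qt ≤ t
      have hle : q * t ≤ t := by nlinarith
      have hb := key_bound (q * t) t t hle (fun x hx => by nlinarith [hx.1, hx.2])
      have habs : |Phi (q * t) - Phi t| = Phi t - Phi (q * t) := by
        rw [abs_sub_comm, abs_of_nonneg]
        have := phi_sub (q * t) t
        have hint : 0 ≤ ∫ x in (q*t)..t, Real.exp (-x ^ 2 / 2) :=
          intervalIntegral.integral_nonneg hle (fun x _ => (Real.exp_pos _).le)
        rw [this]; positivity
      rw [habs]
      calc Phi t - Phi (q * t)
          ≤ (Real.sqrt (2 * Real.pi))⁻¹ * ((t - q * t) * Real.exp (-t ^ 2 / 2)) := hb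
        _ = (Real.sqrt (2 * Real.pi))⁻¹ * ((q - 1) * ((-t) * Real.exp (-(-t) ^ 2 / 2))) := by
            ring_nf
        _ ≤ (Real.sqrt (2 * Real.pi))⁻¹ * ((q - 1) * Real.exp (-(1:ℝ) / 2)) := by
            have := mode_bound (-t) (by linarith)
            have h1 : (0:ℝ) ≤ q - 1 := by linarith
            have h2 : (0:ℝ) ≤ (Real.sqrt (2 * Real.pi))⁻¹ := by positivity
            exact mul_le_mul_of_nonneg_left (mul_le_mul_of_nonneg_left this h1) h2
        _ = (Real.sqrt (2 * Real.pi))⁻¹ * Real.exp (-(1:ℝ) / 2) * (q - 1) := by ring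
  · -- q ≤ 1, max = q⁻¹
    have hmax : max q q⁻¹ = q⁻¹ :=
      max_eq_right (hq1.trans (one_le_inv_iff₀.2 ⟨hq, hq1⟩))
    rw [hmax]
    have hKnn : (0:ℝ) ≤ q⁻¹ - 1 := by
      have : (1:ℝ) ≤ q⁻¹ := one_le_inv_iff₀.2 ⟨hq, hq1⟩
      linarith
    rcases le_total 0 t with ht | ht
    · -- t ≥ 0: qt ≤ t
      have hle : q * t ≤ t := by nlinarith
      have hb := key_bound (q * t) t (q * t) hle
        (fun x hx => by nlinarith [hx.1, hx.2, mul_nonneg hq.le ht])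
      have habs : |Phi (q * t) - Phi t| = Phi t - Phi (q * t) := by
        rw [abs_sub_comm, abs_of_nonneg]
        have := phi_sub (q * t) t
        have hint : 0 ≤ ∫ x in (q*t)..t, Real.exp (-x ^ 2 / 2) :=
          intervalIntegral.integral_nonneg hle (fun x _ => (Real.exp_pos _).le)
        rw [this]; positivity
      rw [habs]
      have hqt : 0 ≤ q * t := by positivity
      calc Phi t - Phi (q * t)
          ≤ (Real.sqrt (2 * Real.pi))⁻¹ * ((t - q * t) * Real.exp (-(q * t) ^ 2 / 2)) := hb
        _ = (Real.sqrt (2 * Real.pi))⁻¹ *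
              ((q⁻¹ - 1) * ((q * t) * Real.exp (-(q * t) ^ 2 / 2))) := by
            field_simp
        _ ≤ (Real.sqrt (2 * Real.pi))⁻¹ * ((q⁻¹ - 1) * Real.exp (-(1:ℝ) / 2)) := by
            have := mode_bound (q * t) hqt
            have h2 : (0:ℝ) ≤ (Real.sqrt (2 * Real.pi))⁻¹ := by positivity
            exact mul_le_mul_of_nonneg_left (mul_le_mul_of_nonneg_left this hKnn) h2
        _ = (Real.sqrt (2 * Real.pi))⁻¹ * Real.exp (-(1:ℝ) / 2) * (q⁻¹ - 1) := by ring
    · -- t ≤ 0: t ≤ qt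
      have hle : t ≤ q * t := by nlinarith
      have hb := key_bound t (q * t) (q * t) hle
        (fun x hx => by nlinarith [hx.1, hx.2, mul_nonneg hq.le (neg_nonneg.2 ht)])
      have habs : |Phi (q * t) - Phi t| = Phi (q * t) - Phi t := by
        rw [abs_of_nonneg]
        have := phi_sub t (q * t)
        have hint : 0 ≤ ∫ x in t..(q*t), Real.exp (-x ^ 2 / 2) :=
          intervalIntegral.integral_nonneg hle (fun x _ => (Real.exp_pos _).le)
        rw [this]; positivity
      rw [habs]
      have hqt : 0 ≤ -(q * t) := by nlinarith
      calc Phi (q * t) - Phi t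
          ≤ (Real.sqrt (2 * Real.pi))⁻¹ * ((q * t - t) * Real.exp (-(q * t) ^ 2 / 2)) := hb
        _ = (Real.sqrt (2 * Real.pi))⁻¹ *
              ((q⁻¹ - 1) * ((-(q * t)) * Real.exp (-(-(q * t)) ^ 2 / 2))) := by
            field_simp
            ring
        _ ≤ (Real.sqrt (2 * Real.pi))⁻¹ * ((q⁻¹ - 1) * Real.exp (-(1:ℝ) / 2)) := by
            have := mode_bound (-(q * t)) hqt
            have h2 : (0:ℝ) ≤ (Real.sqrt (2 * Real.pi))⁻¹ := by positivity
            exact mul_le_mul_of_nonneg_left (mul_le_mul_of_nonneg_left this hKnn) h2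
        _ = (Real.sqrt (2 * Real.pi))⁻¹ * Real.exp (-(1:ℝ) / 2) * (q⁻¹ - 1) := by ring

/-- For every `q > 0`, `sup_t |Φ(q t) − Φ(t)| ≤ (2πe)^{-1/2} (max{q, 1/q} − 1)`. -/
theorem gaussian_scale_ks_bound (q : ℝ) (hq : 0 < q) :
    ⨆ t : ℝ, |Phi (q * t) - Phi t| ≤
      (Real.sqrt (2 * Real.pi * Real.exp 1))⁻¹ * (max q q⁻¹ - 1) := by
  refine Real.iSup_le (fun t => pointwise_bound q t hq) ?_
  have h1 : (1:ℝ) ≤ max q q⁻¹ := by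
    rcases le_total 1 q with h | h
    · exact le_max_of_le_left h
    · exact le_max_of_le_right (one_le_inv_iff₀.2 ⟨hq, h⟩)
  have hc : (0:ℝ) ≤ (Real.sqrt (2 * Real.pi * Real.exp 1))⁻¹ := by positivity
  have := mul_nonneg hc (by linarith : (0:ℝ) ≤ max q q⁻¹ - 1)
  linarith
end

section
/- Let ε ∈ (0,1) and let q ∈ [1−ε, 1+ε]. Then for all real numbers t₁ ≥ 0 and t₂ ≥ 0, |Φ(t₁ + q·t₂) − Φ(t₁ + t₂)| ≤ ε / ((1−ε)·√(2πe)). -/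
open MeasureTheory Real

lemma integrable_gauss : MeasureTheory.Integrable (fun x : ℝ => Real.exp (-x ^ 2 / 2)) := by
  have := integrable_exp_neg_mul_sq (by norm_num : (0:ℝ) < 1/2)
  convert this using 2 with x
  ring_nf

lemma Phi_mono : Monotone Phi := by
  intro x y hxy
  unfold Phi
  apply mul_le_mul_of_nonneg_left _ (by positivity)
  apply MeasureTheory.setIntegral_mono_set integrable_gauss.integrableOn
  · filter_upwards with x using (Real.exp_pos _).le
  · exact HasSubset.Subset.eventuallyLE (Set.Iic_subset_Iic.mpr hxy)

lemma s_exp_bound (s : ℝ) (hs : 0 ≤ s) : s * Real.exp (-s ^ 2 / 2) ≤ Real.exp (-(1/2)) := by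
  rcases eq_or_lt_of_le hs with h | h
  · rw [← h]; simpa using (Real.exp_pos (-(1/2))).le
  · have hlog : Real.log s ≤ s - 1 := Real.log_le_sub_one_of_pos h
    have h2 : Real.log s + (-s ^ 2 / 2) ≤ -(1/2) := by nlinarith [sq_nonneg (s - 1)]
    calc s * Real.exp (-s ^ 2 / 2) = Real.exp (Real.log s + (-s ^ 2 / 2)) := by
          rw [Real.exp_add, Real.exp_log h]
      _ ≤ Real.exp (-(1/2)) := Real.exp_le_exp.mpr h2

lemma Phi_diff_bound (c d : ℝ) (hc : 0 ≤ c) (hcd : c ≤ d) :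
    Phi d - Phi c ≤ (Real.sqrt (2 * Real.pi))⁻¹ * ((d - c) * Real.exp (-c ^ 2 / 2)) := by
  unfold Phi
  rw [← mul_sub]
  have hI := integrable_gauss
  rw [intervalIntegral.integral_Iic_sub_Iic hI.integrableOn hI.integrableOn]
  rw [intervalIntegral.integral_of_le hcd]
  apply mul_le_mul_of_nonneg_left _ (by positivity)
  calc ∫ x in Set.Ioc c d, Real.exp (-x ^ 2 / 2)
      ≤ ∫ _x in Set.Ioc c d, Real.exp (-c ^ 2 / 2) := by
        apply MeasureTheory.setIntegral_mono_on hI.integrableOn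
          ((MeasureTheory.integrableOn_const_iff).mpr (Or.inr measure_Ioc_lt_top)) measurableSet_Ioc
        intro x hx
        apply Real.exp_le_exp.mpr
        have hx1 : c ≤ x := le_of_lt hx.1
        nlinarith
    _ = (d - c) * Real.exp (-c ^ 2 / 2) := by
        simp [Real.volume_Ioc, ENNReal.toReal_ofReal (sub_nonneg.mpr hcd), hcd]

/-- For `ε ∈ (0,1)`, `q ∈ [1−ε, 1+ε]` and `t₁, t₂ ≥ 0`,
`|Φ(t₁ + q t₂) − Φ(t₁ + t₂)| ≤ ε / ((1−ε) √(2πe))`. -/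
theorem gaussian_shift_scale_bound (ε q : ℝ) (hε0 : 0 < ε) (hε1 : ε < 1)
    (hq1 : 1 - ε ≤ q) (hq2 : q ≤ 1 + ε) (t₁ t₂ : ℝ) (ht₁ : 0 ≤ t₁) (ht₂ : 0 ≤ t₂) :
    |Phi (t₁ + q * t₂) - Phi (t₁ + t₂)| ≤
      ε / ((1 - ε) * Real.sqrt (2 * Real.pi * Real.exp 1)) := by
  set a := t₁ + q * t₂ with ha
  set b := t₁ + t₂ with hb
  set c := min a b with hc
  set d := max a b with hd
  have hε' : 0 < 1 - ε := by linarith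
  set m := (1 - ε) * t₂ with hmdef
  have hm0 : 0 ≤ m := by positivity
  have hm : m ≤ c := by
    apply le_min
    · have : (1 - ε) * t₂ ≤ q * t₂ := by nlinarith
      simp only [ha]; linarith
    · simp only [hb]; nlinarith
  have hc0 : 0 ≤ c := hm0.trans hm
  have hcd : c ≤ d := min_le_max
  have hdc : d - c ≤ ε * t₂ := by
    rcases le_total a b with h | h
    · rw [hd, hc, max_eq_right h, min_eq_left h]; simp only [ha, hb]; nlinarith
    · rw [hd, hc, max_eq_left h, min_eq_right h]; simp only [ha, hb]; nlinarith
  have habs : |Phi a - Phi b| = Phi d - Phi c := by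
    rcases le_total a b with h | h
    · rw [hd, hc, max_eq_right h, min_eq_left h, abs_sub_comm,
        abs_of_nonneg (sub_nonneg.mpr (Phi_mono h))]
    · rw [hd, hc, max_eq_left h, min_eq_right h,
        abs_of_nonneg (sub_nonneg.mpr (Phi_mono h))]
  rw [habs]
  have step1 := Phi_diff_bound c d hc0 hcd
  have hexp : Real.exp (-c ^ 2 / 2) ≤ Real.exp (-m ^ 2 / 2) := by
    apply Real.exp_le_exp.mpr; nlinarith
  have step2 : (d - c) * Real.exp (-c ^ 2 / 2) ≤ (ε * t₂) * Real.exp (-m ^ 2 / 2) := by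
    have h1 : 0 ≤ d - c := sub_nonneg.mpr hcd
    have := (Real.exp_pos (-c ^ 2 / 2)).le
    nlinarith [Real.exp_pos (-m ^ 2 / 2)]
  have step3 : (ε * t₂) * Real.exp (-m ^ 2 / 2) ≤ (ε / (1 - ε)) * Real.exp (-(1/2)) := by
    have h1 : (ε * t₂) * Real.exp (-m ^ 2 / 2) = (ε / (1 - ε)) * (m * Real.exp (-m ^ 2 / 2)) := by
      rw [hmdef]; field_simp
    rw [h1]
    have := s_exp_bound m hm0
    have h2 : 0 ≤ ε / (1 - ε) := by positivity
    nlinarith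
  have hsqrt : Real.sqrt (2 * Real.pi * Real.exp 1) =
      Real.sqrt (2 * Real.pi) * Real.exp (1/2) := by
    rw [Real.sqrt_mul (by positivity)]
    congr 1
    rw [show Real.exp 1 = Real.exp (1/2) ^ 2 by
      rw [← Real.exp_nat_mul]; norm_num]
    exact Real.sqrt_sq (Real.exp_pos _).le
  have hfinal : (Real.sqrt (2 * Real.pi))⁻¹ * ((ε / (1 - ε)) * Real.exp (-(1/2))) =
      ε / ((1 - ε) * Real.sqrt (2 * Real.pi * Real.exp 1)) := by
    rw [hsqrt, Real.exp_neg, show Real.exp (1/2) = Real.exp ((1:ℝ)/2) by norm_num]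
    have h1 : Real.sqrt (2 * Real.pi) ≠ 0 := by positivity
    have h2 : Real.exp ((1:ℝ)/2) ≠ 0 := (Real.exp_pos _).ne'
    field_simp
  calc Phi d - Phi c ≤ (Real.sqrt (2 * Real.pi))⁻¹ * ((d - c) * Real.exp (-c ^ 2 / 2)) := step1
    _ ≤ (Real.sqrt (2 * Real.pi))⁻¹ * ((ε / (1 - ε)) * Real.exp (-(1/2))) :=
        mul_le_mul_of_nonneg_left (step2.trans step3) (by positivity)
    _ = ε / ((1 - ε) * Real.sqrt (2 * Real.pi * Real.exp 1)) := hfinal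
end

section
/- Let (𝒵, 𝒜, G) be a probability space, let p̄, q̄ : 𝒵 → (0,∞) be measurable, set ξ := log(q̄/p̄) and W := √(q̄/p̄) − 1, and let u : 𝒵 → ℝ be measurable with E[u²] = a² for some a > 0. Fix a real exponent p > 2 and nonnegative constants φ₀, ω₀, Λ, ν₀, b such that: (i) E[(W − u/2)²] ≤ φ₀; (ii) ξ is integrable and |E[ξ] + b²/2| ≤ ω₀; (iii) (E[|W|^p])^{1/p} ≤ Λ; (iv) (E[|ξ|^{2p/(p−2)}])^{(p−2)/(2p)} ≤ ν₀, with all these moments finite. Then the variance of ξ under G satisfies |Var_G(ξ) − a²| ≤ 4φ₀ + 4a√φ₀ + 4(√φ₀ + a/2)·Λ·ν₀ + Λ²ν₀² + (b²/2 + ω₀)². -/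
open MeasureTheory Real ProbabilityTheory Filter
open scoped ENNReal

-- helper 1: MemLp from integrable rpow of abs
lemma aux_memLp_of_int {α : Type*} [MeasurableSpace α] {μ : Measure α} {f : α → ℝ} {r : ℝ}
    (hr : 0 < r) (hf : AEStronglyMeasurable f μ)
    (h : Integrable (fun z => |f z| ^ r) μ) : MemLp f (ENNReal.ofReal r) μ := by
  have h0 : ENNReal.ofReal r ≠ 0 := by simp [ENNReal.ofReal_eq_zero, not_le, hr]
  have ht : ENNReal.ofReal r ≠ ∞ := ENNReal.ofReal_ne_top
  rw [← memLp_norm_rpow_iff hf h0 ht, ENNReal.div_self h0 ht, memLp_one_iff_integrable]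
  simpa [ENNReal.toReal_ofReal hr.le, Real.norm_eq_abs,
    Real.abs_rpow_of_nonneg (abs_nonneg _), abs_abs] using h

-- helper 2: Cauchy-Schwarz
lemma aux_CS {α : Type*} [MeasurableSpace α] {μ : Measure α} {f g : α → ℝ}
    (hf : MemLp f 2 μ) (hg : MemLp g 2 μ) :
    |∫ z, f z * g z ∂μ| ≤ Real.sqrt (∫ z, f z ^ 2 ∂μ) * Real.sqrt (∫ z, g z ^ 2 ∂μ) := by
  have h2 : (ENNReal.ofReal (2:ℝ)) = 2 := by simp
  have hpq : (2:ℝ).HolderConjugate 2 := Real.holderConjugate_iff.mpr ⟨one_lt_two, by norm_num⟩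
  have hf' : MemLp (fun z => |f z|) (ENNReal.ofReal (2:ℝ)) μ := by rw [h2]; simpa using hf.norm
  have hg' : MemLp (fun z => |g z|) (ENNReal.ofReal (2:ℝ)) μ := by rw [h2]; simpa using hg.norm
  have key := integral_mul_le_Lp_mul_Lq_of_nonneg hpq
    (Eventually.of_forall fun z => abs_nonneg (f z))
    (Eventually.of_forall fun z => abs_nonneg (g z)) hf' hg'
  calc |∫ z, f z * g z ∂μ| ≤ ∫ z, |f z| * |g z| ∂μ := by
        simpa [Real.norm_eq_abs, abs_mul] using norm_integral_le_integral_norm (μ := μ) (fun z => f z * g z)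
    _ ≤ (∫ z, |f z| ^ (2:ℝ) ∂μ) ^ (1/(2:ℝ)) * (∫ z, |g z| ^ (2:ℝ) ∂μ) ^ (1/(2:ℝ)) := key
    _ = Real.sqrt (∫ z, f z ^ 2 ∂μ) * Real.sqrt (∫ z, g z ^ 2 ∂μ) := by
        rw [Real.sqrt_eq_rpow, Real.sqrt_eq_rpow]
        congr 2 <;> refine integral_congr_ae (Eventually.of_forall fun z => ?_) <;>
          simp [Real.rpow_two, sq_abs]

-- helper 3: pointwise log inequality
lemma aux_log_ineq {s : ℝ} (hs : 0 < s) :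
    |2 * Real.log s - 2 * (s - 1)| ≤ |(s - 1) * (2 * Real.log s)| := by
  have h1 : Real.log s ≤ s - 1 := Real.log_le_sub_one_of_pos hs
  have h2 : s - 1 ≤ s * Real.log s := by
    have := Real.log_le_sub_one_of_pos (inv_pos.2 hs)
    rw [Real.log_inv] at this
    have h3 : 1 - s⁻¹ ≤ Real.log s := by linarith
    have := mul_le_mul_of_nonneg_left h3 hs.le
    have hinv : s * s⁻¹ = 1 := mul_inv_cancel₀ hs.ne'
    nlinarith
  have hprod : 0 ≤ (s - 1) * Real.log s := by nlinarith
  rw [abs_of_nonpos (by linarith), abs_of_nonneg (by linarith)]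
  nlinarith

set_option maxHeartbeats 1000000 in
/-- Variance expansion for the log-likelihood ratio `ξ = log(q̄/p̄)` under QMD-type and
Hölder-type moment bounds: `|Var(ξ) − a²| ≤ 4φ₀ + 4a√φ₀ + 4(√φ₀ + a/2)Λν₀ + Λ²ν₀² + (b²/2 + ω₀)²`. -/
theorem variance_loglik_ratio_expansion
    {𝒵 : Type*} [MeasurableSpace 𝒵] (G : Measure 𝒵) [IsProbabilityMeasure G]
    (pbar qbar : 𝒵 → ℝ) (hpbar : Measurable pbar) (hqbar : Measurable qbar)
    (hppos : ∀ z, 0 < pbar z) (hqpos : ∀ z, 0 < qbar z)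
    (ξ W : 𝒵 → ℝ)
    (hξ : ξ = fun z => Real.log (qbar z / pbar z))
    (hW : W = fun z => Real.sqrt (qbar z / pbar z) - 1)
    (u : 𝒵 → ℝ) (hu : Measurable u) (a : ℝ) (ha : 0 < a)
    (hu2int : Integrable (fun z => (u z) ^ 2) G)
    (hua : ∫ z, (u z) ^ 2 ∂G = a ^ 2)
    (p : ℝ) (hp : 2 < p)
    (φ₀ ω₀ Λ ν₀ b : ℝ)
    (hφ₀ : 0 ≤ φ₀) (hω₀ : 0 ≤ ω₀) (hΛ : 0 ≤ Λ) (hν₀ : 0 ≤ ν₀) (hb : 0 ≤ b)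
    (hQMDint : Integrable (fun z => (W z - u z / 2) ^ 2) G)
    (hQMD : ∫ z, (W z - u z / 2) ^ 2 ∂G ≤ φ₀)
    (hmeanint : Integrable ξ G)
    (hmean : |(∫ z, ξ z ∂G) + b ^ 2 / 2| ≤ ω₀)
    (hWpint : Integrable (fun z => |W z| ^ p) G)
    (hWp : (∫ z, |W z| ^ p ∂G) ^ (1 / p) ≤ Λ)
    (hξqint : Integrable (fun z => |ξ z| ^ (2 * p / (p - 2))) G)
    (hξq : (∫ z, |ξ z| ^ (2 * p / (p - 2)) ∂G) ^ ((p - 2) / (2 * p)) ≤ ν₀) :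
    |variance ξ G - a ^ 2| ≤
      4 * φ₀ + 4 * a * Real.sqrt φ₀ + 4 * (Real.sqrt φ₀ + a / 2) * Λ * ν₀
        + Λ ^ 2 * ν₀ ^ 2 + (b ^ 2 / 2 + ω₀) ^ 2 := by
  have hp0 : (0:ℝ) < p := by linarith
  have hp0' : p ≠ 0 := hp0.ne'
  have hps : p - 2 ≠ 0 := by intro h; linarith [sub_eq_zero.mp h]
  have hps' : (0:ℝ) < p - 2 := by linarith
  have hq0 : (0:ℝ) < 2 * p / (p - 2) := by positivity
  -- measurability
  have hWmeas : Measurable W := by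
    rw [hW]; exact (Measurable.sqrt (hqbar.div hpbar)).sub measurable_const
  have hξmeas : Measurable ξ := by rw [hξ]; exact (hqbar.div hpbar).log
  -- MemLp facts
  have hWLp : MemLp W (ENNReal.ofReal p) G :=
    aux_memLp_of_int hp0 hWmeas.aestronglyMeasurable hWpint
  have hξLp : MemLp ξ (ENNReal.ofReal (2 * p / (p - 2))) G :=
    aux_memLp_of_int hq0 hξmeas.aestronglyMeasurable hξqint
  have hexp : (1:ℝ≥0∞)/2 = 1/ENNReal.ofReal p + 1/ENNReal.ofReal (2*p/(p-2)) := by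
    rw [one_div, one_div, one_div, ← ENNReal.ofReal_inv_of_pos hp0,
      ← ENNReal.ofReal_inv_of_pos hq0,
      ← ENNReal.ofReal_add (by positivity) (by positivity),
      show p⁻¹ + (2*p/(p-2))⁻¹ = (2:ℝ)⁻¹ by field_simp; ring,
      ENNReal.ofReal_inv_of_pos (by norm_num : (0:ℝ) < 2)]
    norm_num
  have hWξL2 : MemLp (fun z => W z * ξ z) 2 G := by
    haveI : ENNReal.HolderTriple (ENNReal.ofReal p) (ENNReal.ofReal (2*p/(p-2))) 2 :=
      ⟨by simpa only [one_div] using hexp.symm⟩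
    have h := hξLp.smul hWLp (r := 2)
    exact h
  -- squares in appropriate Lp spaces
  have eW : ∀ z : 𝒵, ((W z ^ 2 : ℝ)) ^ (p/2) = |W z| ^ p := by
    intro z
    rw [← sq_abs, ← Real.rpow_natCast |W z| 2, ← Real.rpow_mul (abs_nonneg _),
      show ((2:ℕ):ℝ) * (p/2) = p by push_cast; ring]
  have eξ : ∀ z : 𝒵, ((ξ z ^ 2 : ℝ)) ^ (p/(p-2)) = |ξ z| ^ (2*p/(p-2)) := by
    intro z
    rw [← sq_abs, ← Real.rpow_natCast |ξ z| 2, ← Real.rpow_mul (abs_nonneg _),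
      show ((2:ℕ):ℝ) * (p/(p-2)) = 2*p/(p-2) by push_cast; ring]
  have hW2Lp : MemLp (fun z => W z ^ 2) (ENNReal.ofReal (p/2)) G := by
    apply aux_memLp_of_int (by linarith) ((hWmeas.pow_const 2).aestronglyMeasurable)
    have : (fun z => |W z ^ 2| ^ (p/2)) = fun z => |W z| ^ p := by
      funext z; rw [abs_of_nonneg (sq_nonneg _), eW z]
    rw [this]; exact hWpint
  have hξ2Lp : MemLp (fun z => ξ z ^ 2) (ENNReal.ofReal (p/(p-2))) G := by
    apply aux_memLp_of_int (by positivity) ((hξmeas.pow_const 2).aestronglyMeasurable)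
    have : (fun z => |ξ z ^ 2| ^ (p/(p-2))) = fun z => |ξ z| ^ (2*p/(p-2)) := by
      funext z; rw [abs_of_nonneg (sq_nonneg _), eξ z]
    rw [this]; exact hξqint
  -- Hölder bound for ∫ (Wξ)²
  have hXnn : 0 ≤ ∫ z, |W z| ^ p ∂G :=
    integral_nonneg fun z => Real.rpow_nonneg (abs_nonneg _) _
  have hYnn : 0 ≤ ∫ z, |ξ z| ^ (2*p/(p-2)) ∂G :=
    integral_nonneg fun z => Real.rpow_nonneg (abs_nonneg _) _
  have hIW : (∫ z, |W z| ^ p ∂G) ^ (1/(p/2)) ≤ Λ ^ 2 := by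
    rw [show (1:ℝ)/(p/2) = (1/p)*2 by field_simp, Real.rpow_mul hXnn, Real.rpow_two]
    exact pow_le_pow_left₀ (Real.rpow_nonneg hXnn _) hWp 2
  have hIξ : (∫ z, |ξ z| ^ (2*p/(p-2)) ∂G) ^ (1/(p/(p-2))) ≤ ν₀ ^ 2 := by
    rw [show (1:ℝ)/(p/(p-2)) = ((p-2)/(2*p))*2 by field_simp,
      Real.rpow_mul hYnn, Real.rpow_two]
    exact pow_le_pow_left₀ (Real.rpow_nonneg hYnn _) hξq 2
  have hWξsq : ∫ z, (W z * ξ z) ^ 2 ∂G ≤ Λ ^ 2 * ν₀ ^ 2 := by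
    have hpq2 : (p/2).HolderConjugate (p/(p-2)) := Real.holderConjugate_iff.mpr ⟨by linarith, by field_simp; ring⟩
    have key := integral_mul_le_Lp_mul_Lq_of_nonneg hpq2
      (Eventually.of_forall fun z => sq_nonneg (W z))
      (Eventually.of_forall fun z => sq_nonneg (ξ z)) hW2Lp hξ2Lp
    simp only [eW, eξ] at key
    calc ∫ z, (W z * ξ z) ^ 2 ∂G = ∫ z, (W z ^ 2) * (ξ z ^ 2) ∂G := by
          congr 1; funext z; ring
      _ ≤ (∫ z, |W z| ^ p ∂G) ^ (1/(p/2)) * (∫ z, |ξ z| ^ (2*p/(p-2)) ∂G) ^ (1/(p/(p-2))) := key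
      _ ≤ Λ ^ 2 * ν₀ ^ 2 :=
          mul_le_mul hIW hIξ (Real.rpow_nonneg hYnn _) (by positivity)
  -- D and R
  set D : 𝒵 → ℝ := fun z => W z - u z / 2 with hDdef
  set R : 𝒵 → ℝ := fun z => ξ z - 2 * W z with hRdef
  have hRle : ∀ z, |R z| ≤ |W z * ξ z| := by
    intro z
    have ht : 0 < qbar z / pbar z := div_pos (hqpos z) (hppos z)
    have hs : 0 < Real.sqrt (qbar z / pbar z) := Real.sqrt_pos.2 ht
    have hξz : ξ z = 2 * Real.log (Real.sqrt (qbar z / pbar z)) := by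
      simp only [hξ, Real.log_sqrt ht.le]; ring
    have hWz : W z = Real.sqrt (qbar z / pbar z) - 1 := by rw [hW]
    have key := aux_log_ineq hs
    have hRz : R z = 2 * Real.log (Real.sqrt (qbar z / pbar z))
        - 2 * (Real.sqrt (qbar z / pbar z) - 1) := by
      simp only [hRdef]; rw [hξz, hWz]
    calc |R z| = |2 * Real.log (Real.sqrt (qbar z / pbar z))
          - 2 * (Real.sqrt (qbar z / pbar z) - 1)| := by rw [hRz]
      _ ≤ |(Real.sqrt (qbar z / pbar z) - 1)
          * (2 * Real.log (Real.sqrt (qbar z / pbar z)))| := key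
      _ = |W z * ξ z| := by rw [hξz, hWz]
  have hDmeas : Measurable D := by rw [hDdef]; exact hWmeas.sub (hu.div_const 2)
  have hRmeas : Measurable R := by rw [hRdef]; exact hξmeas.sub (hWmeas.const_mul 2)
  have iD2 : Integrable (fun z => D z ^ 2) G := by simp only [hDdef]; exact hQMDint
  have hDL2 : MemLp D 2 G := (memLp_two_iff_integrable_sq hDmeas.aestronglyMeasurable).2 iD2
  have huL2 : MemLp u 2 G := (memLp_two_iff_integrable_sq hu.aestronglyMeasurable).2 hu2int
  have hRL2 : MemLp R 2 G := by
    apply hWξL2.of_le hRmeas.aestronglyMeasurable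
    exact Eventually.of_forall fun z => by
      rw [Real.norm_eq_abs, Real.norm_eq_abs]; exact hRle z
  have iR2 : Integrable (fun z => R z ^ 2) G := hRL2.integrable_sq
  have hξL2 : MemLp ξ 2 G := by
    have hxieq : ξ = fun z => u z + (2 * D z + R z) := by
      funext z; simp only [hDdef, hRdef]; ring
    rw [hxieq]; exact huL2.add ((hDL2.const_mul 2).add hRL2)
  -- products integrable
  have hmul : ∀ f g' : 𝒵 → ℝ, MemLp f 2 G → MemLp g' 2 G →
      Integrable (fun z => f z * g' z) G := by
    intro f g' hf hg'
    have hh : (1:ℝ≥0∞)/1 = 1/2 + 1/2 := by rw [ENNReal.add_halves]; simp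
    haveI : ENNReal.HolderTriple 2 2 1 := ⟨by simpa only [one_div] using hh.symm⟩
    have h := hg'.smul hf (r := 1)
    rw [← memLp_one_iff_integrable]
    exact h
  have iDR : Integrable (fun z => D z * R z) G := hmul D R hDL2 hRL2
  have iuD : Integrable (fun z => u z * D z) G := hmul u D huL2 hDL2
  have iuR : Integrable (fun z => u z * R z) G := hmul u R huL2 hRL2
  -- decomposition of the second moment
  have hsplit : ∫ z, ξ z ^ 2 ∂G - a ^ 2
      = 4 * (∫ z, D z ^ 2 ∂G) + (∫ z, R z ^ 2 ∂G) + 4 * (∫ z, D z * R z ∂G)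
        + 4 * (∫ z, u z * D z ∂G) + 2 * (∫ z, u z * R z ∂G) := by
    have hfun : (fun z => ξ z ^ 2) = fun z =>
        u z ^ 2 + (4 * (D z ^ 2) + R z ^ 2 + 4 * (D z * R z)
          + 4 * (u z * D z) + 2 * (u z * R z)) := by
      funext z; simp only [hDdef, hRdef]; ring
    have cD : Integrable (fun z => 4 * (D z ^ 2)) G := iD2.const_mul 4
    have cDR : Integrable (fun z => 4 * (D z * R z)) G := iDR.const_mul 4
    have cuD : Integrable (fun z => 4 * (u z * D z)) G := iuD.const_mul 4
    have cuR : Integrable (fun z => 2 * (u z * R z)) G := iuR.const_mul 2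
    have i2 : Integrable (fun z => 4 * (D z ^ 2) + R z ^ 2) G := cD.add iR2
    have i3 : Integrable (fun z => 4 * (D z ^ 2) + R z ^ 2 + 4 * (D z * R z)) G := i2.add cDR
    have i4 : Integrable (fun z => 4 * (D z ^ 2) + R z ^ 2 + 4 * (D z * R z)
        + 4 * (u z * D z)) G := i3.add cuD
    have i5 : Integrable (fun z => 4 * (D z ^ 2) + R z ^ 2 + 4 * (D z * R z)
        + 4 * (u z * D z) + 2 * (u z * R z)) G := i4.add cuR
    rw [hfun, integral_add hu2int i5, integral_add i4 cuR, integral_add i3 cuD,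
      integral_add i2 cDR, integral_add cD iR2,
      integral_const_mul, integral_const_mul, integral_const_mul, integral_const_mul, hua]
    ring
  -- quantitative bounds
  have hDnn : 0 ≤ ∫ z, D z ^ 2 ∂G := integral_nonneg fun z => sq_nonneg _
  have hRnn : 0 ≤ ∫ z, R z ^ 2 ∂G := integral_nonneg fun z => sq_nonneg _
  have hDle : ∫ z, D z ^ 2 ∂G ≤ φ₀ := by simp only [hDdef]; exact hQMD
  have hR2le : ∫ z, R z ^ 2 ∂G ≤ Λ ^ 2 * ν₀ ^ 2 := by
    refine le_trans (integral_mono iR2 hWξL2.integrable_sq fun z => ?_) hWξsq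
    calc R z ^ 2 = |R z| ^ 2 := (sq_abs _).symm
      _ ≤ |W z * ξ z| ^ 2 := pow_le_pow_left₀ (abs_nonneg _) (hRle z) 2
      _ = (W z * ξ z) ^ 2 := sq_abs _
  have hsD : Real.sqrt (∫ z, D z ^ 2 ∂G) ≤ Real.sqrt φ₀ := Real.sqrt_le_sqrt hDle
  have hsR : Real.sqrt (∫ z, R z ^ 2 ∂G) ≤ Λ * ν₀ := by
    have h := Real.sqrt_le_sqrt (show ∫ z, R z ^ 2 ∂G ≤ (Λ * ν₀) ^ 2 by nlinarith)
    rwa [Real.sqrt_sq (mul_nonneg hΛ hν₀)] at h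
  have hsu : Real.sqrt (∫ z, u z ^ 2 ∂G) = a := by rw [hua, Real.sqrt_sq ha.le]
  have bDR : |∫ z, D z * R z ∂G| ≤ Real.sqrt φ₀ * (Λ * ν₀) :=
    le_trans (aux_CS hDL2 hRL2)
      (mul_le_mul hsD hsR (Real.sqrt_nonneg _) (Real.sqrt_nonneg _))
  have buD : |∫ z, u z * D z ∂G| ≤ a * Real.sqrt φ₀ := by
    refine le_trans (aux_CS huL2 hDL2) ?_
    rw [hsu]
    exact mul_le_mul_of_nonneg_left hsD ha.le
  have buR : |∫ z, u z * R z ∂G| ≤ a * (Λ * ν₀) := by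
    refine le_trans (aux_CS huL2 hRL2) ?_
    rw [hsu]
    exact mul_le_mul_of_nonneg_left hsR ha.le
  have hsecond : |∫ z, ξ z ^ 2 ∂G - a ^ 2|
      ≤ 4 * φ₀ + Λ ^ 2 * ν₀ ^ 2 + 4 * (Real.sqrt φ₀ * (Λ * ν₀))
        + 4 * (a * Real.sqrt φ₀) + 2 * (a * (Λ * ν₀)) := by
    rw [hsplit, abs_le]
    have h1 := abs_le.mp bDR
    have h2 := abs_le.mp buD
    have h3 := abs_le.mp buR
    constructor <;> linarith [h1.1, h1.2, h2.1, h2.2, h3.1, h3.2, hDnn, hRnn, hDle, hR2le]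
  -- the mean
  have habsmean : |∫ z, ξ z ∂G| ≤ b ^ 2 / 2 + ω₀ := by
    have h := abs_le.mp hmean
    rw [abs_le]
    constructor <;> nlinarith [sq_nonneg b]
  have hmeansq : (∫ z, ξ z ∂G) ^ 2 ≤ (b ^ 2 / 2 + ω₀) ^ 2 := by
    calc (∫ z, ξ z ∂G) ^ 2 = |∫ z, ξ z ∂G| ^ 2 := (sq_abs _).symm
      _ ≤ (b ^ 2 / 2 + ω₀) ^ 2 := pow_le_pow_left₀ (abs_nonneg _) habsmean 2
  -- assemble
  rw [variance_eq_sub hξL2]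
  have hpi : (∫ z, (ξ ^ 2) z ∂G) = ∫ z, ξ z ^ 2 ∂G := by
    congr 1
  calc |(∫ z, (ξ ^ 2) z ∂G) - (∫ z, ξ z ∂G) ^ 2 - a ^ 2|
      = |((∫ z, ξ z ^ 2 ∂G) - a ^ 2) + (-((∫ z, ξ z ∂G) ^ 2))| := by rw [hpi]; ring_nf
    _ ≤ |(∫ z, ξ z ^ 2 ∂G) - a ^ 2| + |(-((∫ z, ξ z ∂G) ^ 2))| := abs_add_le _ _
    _ = |(∫ z, ξ z ^ 2 ∂G) - a ^ 2| + (∫ z, ξ z ∂G) ^ 2 := by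
        rw [abs_neg, abs_of_nonneg (sq_nonneg (∫ z, ξ z ∂G))]
    _ ≤ (4 * φ₀ + Λ ^ 2 * ν₀ ^ 2 + 4 * (Real.sqrt φ₀ * (Λ * ν₀))
        + 4 * (a * Real.sqrt φ₀) + 2 * (a * (Λ * ν₀))) + (b ^ 2 / 2 + ω₀) ^ 2 :=
        add_le_add hsecond hmeansq
    _ = 4 * φ₀ + 4 * a * Real.sqrt φ₀ + 4 * (Real.sqrt φ₀ + a / 2) * Λ * ν₀
        + Λ ^ 2 * ν₀ ^ 2 + (b ^ 2 / 2 + ω₀) ^ 2 := by ring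
end

section
/- Let M > 0 and R ≥ 0 be real random variables on a probability space, let α ∈ (0,1), and let ε > 0. Then E[Φ(log(1/α)/M + M·R/2)] ≥ min{Φ(log(1/α)/ε), Φ(1/(2ε))} − P({M ≥ ε} ∩ {M·R ≤ 1/ε}). -/
open MeasureTheory Real

lemma Phi_nonneg (t : ℝ) : 0 ≤ Phi t := by
  apply mul_nonneg (by positivity)
  apply setIntegral_nonneg measurableSet_Iic
  intro x _; positivity

lemma Phi_le_one (t : ℝ) : Phi t ≤ 1 := by
  have h : ∫ x : ℝ, Real.exp (-x ^ 2 / 2) = Real.sqrt (2 * Real.pi) := by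
    have := integral_gaussian (1/2 : ℝ)
    have he : (fun x : ℝ => Real.exp (-(1/2) * x ^ 2)) = fun x : ℝ => Real.exp (-x ^ 2 / 2) := by
      funext x; ring_nf
    rw [he] at this
    rw [this, show ((π:ℝ)/(1/2)) = 2*π by ring]
  have hle : ∫ x in Set.Iic t, Real.exp (-x ^ 2 / 2) ≤ ∫ x : ℝ, Real.exp (-x ^ 2 / 2) := by
    apply setIntegral_le_integral gauss_integrable
    filter_upwards with x using by positivity
  have hpos : 0 < Real.sqrt (2 * Real.pi) := Real.sqrt_pos.mpr (by positivity)
  calc Phi t ≤ (Real.sqrt (2 * Real.pi))⁻¹ * Real.sqrt (2 * Real.pi) := by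
        rw [Phi]; apply mul_le_mul_of_nonneg_left _ (by positivity)
        rw [← h]; exact hle
    _ = 1 := inv_mul_cancel₀ hpos.ne'

/-- Core bound of Corollary 1: for random variables `M > 0` and `R ≥ 0`, `α ∈ (0,1)`,
`ε > 0`, `E[Φ(log(1/α)/M + M R/2)] ≥ min{Φ(log(1/α)/ε), Φ(1/(2ε))} − P(M ≥ ε, M R ≤ 1/ε)`. -/
theorem universal_inference_extreme_conservativeness_core
    {Ω : Type*} [MeasurableSpace Ω] (P : Measure Ω) [IsProbabilityMeasure P]
    (M R : Ω → ℝ) (hM : Measurable M) (hR : Measurable R)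
    (hMpos : ∀ᵐ ω ∂P, 0 < M ω) (hRnonneg : ∀ᵐ ω ∂P, 0 ≤ R ω)
    (α : ℝ) (hα0 : 0 < α) (hα1 : α < 1) (ε : ℝ) (hε : 0 < ε) :
    min (Phi (Real.log (1 / α) / ε)) (Phi (1 / (2 * ε)))
        - (P ({ω | ε ≤ M ω} ∩ {ω | M ω * R ω ≤ 1 / ε})).toReal ≤
      ∫ ω, Phi (Real.log (1 / α) / M ω + M ω * R ω / 2) ∂P := by
  set c := min (Phi (Real.log (1 / α) / ε)) (Phi (1 / (2 * ε))) with hc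
  set A : Set Ω := {ω | ε ≤ M ω} ∩ {ω | M ω * R ω ≤ 1 / ε} with hA
  have hAmeas : MeasurableSet A :=
    (measurableSet_le measurable_const hM).inter
      (measurableSet_le (hM.mul hR) measurable_const)
  have hlog : 0 < Real.log (1 / α) := Real.log_pos (by rw [lt_div_iff₀ hα0]; linarith)
  -- measurability of the integrand
  have hargmeas : Measurable (fun ω => Real.log (1 / α) / M ω + M ω * R ω / 2) :=
    ((measurable_const.div hM)).add ((hM.mul hR).div_const 2)
  have hPhimeas : Measurable (fun ω => Phi (Real.log (1 / α) / M ω + M ω * R ω / 2)) :=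
    Phi_mono.measurable.comp hargmeas
  have hPhiint : Integrable (fun ω => Phi (Real.log (1 / α) / M ω + M ω * R ω / 2)) P := by
    apply Integrable.mono' (integrable_const (1 : ℝ)) hPhimeas.aestronglyMeasurable
    filter_upwards with ω
    rw [Real.norm_eq_abs, abs_of_nonneg (Phi_nonneg _)]
    exact Phi_le_one _
  have hindint : Integrable (A.indicator (1 : Ω → ℝ)) P :=
    (integrable_const (1 : ℝ)).indicator hAmeas
  have hgint : Integrable (fun ω => c - A.indicator (1 : Ω → ℝ) ω) P :=
    (integrable_const c).sub hindint
  have key : ∀ᵐ ω ∂P, c - A.indicator (1 : Ω → ℝ) ω ≤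
      Phi (Real.log (1 / α) / M ω + M ω * R ω / 2) := by
    filter_upwards [hMpos, hRnonneg] with ω hMω hRω
    by_cases hω : ω ∈ A
    · rw [Set.indicator_of_mem hω, Pi.one_apply]
      have : c ≤ 1 := le_trans (min_le_left _ _) (Phi_le_one _)
      linarith [Phi_nonneg (Real.log (1 / α) / M ω + M ω * R ω / 2)]
    · rw [Set.indicator_of_notMem hω, sub_zero]
      rw [hA, Set.mem_inter_iff, not_and_or] at hω
      rcases hω with h | h
      · have hMlt : M ω < ε := lt_of_not_ge h
        refine le_trans (min_le_left _ _) (Phi_mono ?_)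
        have h1 : Real.log (1 / α) / ε ≤ Real.log (1 / α) / M ω := by
          gcongr
        have h2 : 0 ≤ M ω * R ω / 2 := by positivity
        linarith
      · have hgt : 1 / ε < M ω * R ω := lt_of_not_ge h
        refine le_trans (min_le_right _ _) (Phi_mono ?_)
        have h1 : 0 ≤ Real.log (1 / α) / M ω := by positivity
        have h2 : 1 / (2 * ε) ≤ M ω * R ω / 2 := by
          rw [show (1 : ℝ) / (2 * ε) = (1 / ε) / 2 by ring]
          linarith
        linarith
  calc c - (P A).toReal
      = ∫ ω, (c - A.indicator (1 : Ω → ℝ) ω) ∂P := by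
        rw [integral_sub (integrable_const c) hindint, integral_const,
          integral_indicator_one hAmeas]
        simp [measure_univ]
        rfl
    _ ≤ ∫ ω, Phi (Real.log (1 / α) / M ω + M ω * R ω / 2) ∂P :=
        integral_mono_ae hgint hPhiint key
end
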